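/- Let P ⊆ R^2 be a polytope with non-empty interior and u ∈ ∂P. Then there exists r > 0 such that (u + rB) ∩ P = (u + rB) ∩ (P+u)/2, where B is the closed unit Euclidean ball in R^2. -/

import Mathlib

open Set Pointwise Metric

noncomputable section

local notation "E2" => EuclideanSpace ℝ (Fin 2)

lemma simplex_key (T : Finset E2)
    (hT : AffineIndependent ℝ ((↑) : T → E2))
    (u : E2) (hu : u ∈ convexHull ℝ (T : Set E2)) :
    ∃ ρ : ℝ, 0 < ρ ∧ ∀ x ∈ convexHull ℝ (T : Set E2),
      dist x u ≤ ρ → (2:ℝ) • x - u ∈ convexHull ℝ (T : Set E2) := by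
  classical
  have hT' : AffineIndependent ℝ (fun p : (T : Set E2) => (p : E2)) := hT
  obtain ⟨s, hTs, hs_ind, hs_top⟩ := exists_subset_affineIndependent_affineSpan_eq_top hT'
  have hs_fin : s.Finite := finite_set_of_fin_dim_affineIndependent ℝ hs_ind
  haveI : Fintype s := hs_fin.fintype
  let b : AffineBasis s ℝ E2 := ⟨(↑), hs_ind, by rwa [Subtype.range_coe]⟩
  have hb : ∀ i : s, b i = (i : E2) := fun i => rfl
  let I : Finset s := Finset.univ.filter (fun i => (i : E2) ∈ T)
  have hbI : ∀ i : s, i ∈ I ↔ (i : E2) ∈ T := by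
    intro i; simp [I]
  -- sum of coords over I equals 1 when coords vanish off I
  -- characterization of membership in convexHull T
  have key : ∀ x : E2, x ∈ convexHull ℝ (T : Set E2) ↔
      (∀ i : s, 0 ≤ b.coord i x) ∧ ∀ i : s, (i : E2) ∉ T → b.coord i x = 0 := by
    intro x
    constructor
    · intro hx
      rw [Finset.convexHull_eq] at hx
      obtain ⟨w, hw0, hw1, hwx⟩ := hx
      rw [← affineCombination_eq_centerMass hw1] at hwx
      -- reindex through the embedding
      let e : s ↪ E2 := Function.Embedding.subtype _
      have hIT : I.map e = T := by
        ext y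
        simp only [Finset.mem_map]
        constructor
        · rintro ⟨i, hi, rfl⟩; exact (hbI i).1 hi
        · intro hy; exact ⟨⟨y, hTs hy⟩, (hbI _).2 hy, rfl⟩
      have hsum : ∑ i ∈ I, (w ∘ e) i = 1 := by
        rw [← hw1, ← hIT, Finset.sum_map]
        rfl
      have hxc : x = I.affineCombination ℝ b (w ∘ e) := by
        rw [← hwx, ← hIT, Finset.affineCombination_map]
        rfl
      constructor
      · intro i
        by_cases hi : i ∈ I
        · rw [hxc, b.coord_apply_combination_of_mem hi hsum]
          exact hw0 _ ((hbI i).1 hi)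
        · rw [hxc, b.coord_apply_combination_of_notMem hi hsum]
      · intro i hi
        rw [hxc, b.coord_apply_combination_of_notMem (fun h => hi ((hbI i).1 h)) hsum]
    · rintro ⟨h0, hz⟩
      have hx : x = Finset.univ.affineCombination ℝ b (fun i => b.coord i x) :=
        (b.affineCombination_coord_eq_self x).symm
      have hind : Set.indicator (I : Set s) (fun i => b.coord i x) = fun i => b.coord i x := by
        funext i
        by_cases hi : i ∈ I
        · simp [Set.indicator, hi]
        · simp only [Set.indicator, Finset.mem_coe, hi, if_neg]
          rw [hz i (fun h => hi ((hbI i).2 h))]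
          simp [hi]
      have hx2 : x = I.affineCombination ℝ b (fun i => b.coord i x) := by
        rw [Finset.affineCombination_indicator_subset _ _ (I.subset_univ), hind, ← hx]
      have hsum : ∑ i ∈ I, b.coord i x = 1 := by
        rw [Finset.sum_subset (I.subset_univ) (fun i _ hi => hz i (fun h => hi ((hbI i).2 h)))]
        exact b.sum_coord_apply_eq_one x
      rw [hx2, affineCombination_eq_centerMass hsum]
      exact I.centerMass_mem_convexHull (fun i hi => h0 i) (by rw [hsum]; exact one_pos)
        (fun i hi => by rw [hb]; exact Finset.mem_coe.2 ((hbI i).1 hi))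
  -- coordinates of u
  have hμ := (key u).1 hu
  -- positive minimum of positive coordinates
  let J : Finset s := Finset.univ.filter (fun i => 0 < b.coord i u)
  have hJ : J.Nonempty := by
    by_contra h
    rw [Finset.not_nonempty_iff_eq_empty] at h
    have : ∀ i : s, b.coord i u = 0 := by
      intro i
      have hi : i ∉ J := by rw [h]; exact Finset.notMem_empty i
      simp only [J, Finset.mem_filter, Finset.mem_univ, true_and, not_lt] at hi
      exact le_antisymm hi (hμ.1 i)
    have h1 : (1:ℝ) = 0 := by
      rw [← b.sum_coord_apply_eq_one u]
      simp [this]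
    norm_num at h1
  let ε : ℝ := J.inf' hJ (fun i => b.coord i u)
  have hε : 0 < ε := by
    rw [Finset.lt_inf'_iff]
    intro i hi
    simpa [J] using (Finset.mem_filter.1 hi).2
  -- continuity of coordinates
  have hcont : ContinuousAt (fun x : E2 => (fun i => b.coord i x : s → ℝ)) u :=
    (continuous_pi (fun i : s => (b.coord i).continuous_of_finiteDimensional)).continuousAt
  rw [Metric.continuousAt_iff] at hcont
  obtain ⟨δ, hδ, hδ'⟩ := hcont (ε/2) (by positivity)
  refine ⟨δ/2, by positivity, ?_⟩
  intro x hx hdx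
  have hd : dist (fun i => b.coord i x : s → ℝ) (fun i => b.coord i u) < ε/2 :=
    hδ' (lt_of_le_of_lt hdx (by linarith))
  have hcoordclose : ∀ i : s, |b.coord i x - b.coord i u| < ε/2 := by
    intro i
    have := dist_le_pi_dist (fun i => b.coord i x : s → ℝ) (fun i => b.coord i u) i
    rw [Real.dist_eq] at this
    exact lt_of_le_of_lt this hd
  have hlam := (key x).1 hx
  -- coordinates of 2x - u
  have hcoord : ∀ i : s, b.coord i ((2:ℝ) • x - u) = 2 * b.coord i x - b.coord i u := by
    intro i
    have h1 : ((2:ℝ) • x - u) = (x - u) +ᵥ x := by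
      rw [vadd_eq_add]; module
    rw [h1, AffineMap.map_vadd]
    have h2 : (b.coord i).linear (x - u) = b.coord i x - b.coord i u := by
      have := (b.coord i).linearMap_vsub x u
      simpa [vsub_eq_sub] using this
    rw [h2, vadd_eq_add]
    ring
  refine (key _).2 ⟨?_, ?_⟩
  · intro i
    rw [hcoord]
    rcases eq_or_lt_of_le (hμ.1 i) with h | h
    · have := hlam.1 i
      rw [← h]
      linarith
    · have hiJ : i ∈ J := by simp [J, h]
      have hεle : ε ≤ b.coord i u := Finset.inf'_le _ hiJ
      have := hcoordclose i
      rw [abs_lt] at this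
      linarith
  · intro i hi
    rw [hcoord, hμ.2 i hi, hlam.2 i hi]
    ring


/-- A polytope is the convex hull of finitely many points. -/
def IsPolytope {n : ℕ} (P : Set (EuclideanSpace ℝ (Fin n))) : Prop :=
  ∃ S : Finset (EuclideanSpace ℝ (Fin n)), P = convexHull ℝ (S : Set (EuclideanSpace ℝ (Fin n)))

theorem stmt_10 (P : Set (EuclideanSpace ℝ (Fin 2))) (hP : IsPolytope P)
    (hint : (interior P).Nonempty) (u : EuclideanSpace ℝ (Fin 2)) (hu : u ∈ frontier P) :
    ∃ r : ℝ, 0 < r ∧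
      Metric.closedBall u r ∩ P =
        Metric.closedBall u r ∩ (((2 : ℝ)⁻¹) • (P + ({u} : Set (EuclideanSpace ℝ (Fin 2))))) := by
  classical
  obtain ⟨S, rfl⟩ := hP
  have hclosed : IsClosed (convexHull ℝ (S : Set E2)) := S.finite_toSet.isClosed_convexHull ℝ
  have huP : u ∈ convexHull ℝ (S : Set E2) := hclosed.frontier_subset hu
  have hconv : Convex ℝ (convexHull ℝ (S : Set E2)) := convex_convexHull ℝ _
  have key : ∀ T : Finset E2, ∃ ρ : ℝ, 0 < ρ ∧
      ((T : Set E2) ⊆ (S : Set E2) → AffineIndependent ℝ ((↑) : T → E2) →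
        ∀ x ∈ convexHull ℝ (T : Set E2), dist x u ≤ ρ →
          (2:ℝ) • x - u ∈ convexHull ℝ (S : Set E2)) := by
    intro T
    by_cases hai : AffineIndependent ℝ ((↑) : T → E2)
    · by_cases huT : u ∈ convexHull ℝ (T : Set E2)
      · obtain ⟨ρ, hρ, h⟩ := simplex_key T hai u huT
        exact ⟨ρ, hρ, fun hTS _ x hx hd => convexHull_mono hTS (h x hx hd)⟩
      · rcases T.eq_empty_or_nonempty with rfl | hTne
        · exact ⟨1, one_pos, fun _ _ x hx => by simp at hx⟩
        · have hTcne : (convexHull ℝ (T : Set E2)).Nonempty :=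
            ⟨hTne.choose, subset_convexHull ℝ _ (Finset.mem_coe.2 hTne.choose_spec)⟩
          have hTc : IsClosed (convexHull ℝ (T : Set E2)) := T.finite_toSet.isClosed_convexHull ℝ
          have hpos : 0 < infDist u (convexHull ℝ (T : Set E2)) :=
            (hTc.notMem_iff_infDist_pos hTcne).1 huT
          refine ⟨infDist u (convexHull ℝ (T : Set E2)) / 2, by positivity, ?_⟩
          intro _ _ x hx hd
          exfalso
          have h1 : infDist u (convexHull ℝ (T : Set E2)) ≤ dist u x := infDist_le_dist_of_mem hx
          rw [dist_comm] at h1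
          linarith
    · exact ⟨1, one_pos, fun _ hai' => absurd hai' hai⟩
  choose ρ hρ using key
  have hpow : (S.powerset).Nonempty := ⟨∅, Finset.empty_mem_powerset S⟩
  refine ⟨S.powerset.inf' hpow ρ, ?_, ?_⟩
  · rw [Finset.lt_inf'_iff]
    exact fun T _ => (hρ T).1
  · ext y
    simp only [Set.mem_inter_iff, Metric.mem_closedBall]
    constructor
    · rintro ⟨hd, hy⟩
      refine ⟨hd, ?_⟩
      rw [convexHull_eq_union] at hy
      simp only [Set.mem_iUnion] at hy
      obtain ⟨T, hTS, hai, hyT⟩ := hy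
      have h2 : (2:ℝ) • y - u ∈ convexHull ℝ (S : Set E2) :=
        (hρ T).2 hTS hai y hyT
          (le_trans hd (Finset.inf'_le _ (Finset.mem_powerset.2 (Finset.coe_subset.1 hTS))))
      refine Set.mem_smul_set.2 ⟨(2:ℝ) • y, ?_, ?_⟩
      · exact Set.mem_add.2 ⟨(2:ℝ) • y - u, h2, u, Set.mem_singleton u, by abel⟩
      · rw [smul_smul]; norm_num
    · rintro ⟨hd, hy⟩
      refine ⟨hd, ?_⟩
      obtain ⟨z, hz, hzy⟩ := Set.mem_smul_set.1 hy
      obtain ⟨p, hp, q, hq, rfl⟩ := Set.mem_add.1 hz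
      rw [Set.mem_singleton_iff] at hq
      have hy2 : y = (2:ℝ)⁻¹ • p + (2:ℝ)⁻¹ • u := by
        rw [← hzy, hq]; module
      rw [hy2]
      exact hconv hp huP (by norm_num) (by norm_num) (by norm_num)

end
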